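/- Let k ≥ 1 and let z be a complex number with z ≠ 0, z ≠ L_n/L_{n-1} for all integers n, and z ≠ φ, -1/φ. Then the bilateral Lucas Eisenstein series 𝓛_{2k}(z) := Σ_{j∈ℤ} (L_j z + L_{j-1})^{-2k} satisfies 𝓛_{2k}(-1/z) = z^{2k} 𝓛_{2k}(z). -/

import Mathlib

/-- For `k ≥ 1` and `z` avoiding `0`, all ratios `L_n/L_{n-1}`, `φ` and `-1/φ`, the bilateral
Lucas Eisenstein series satisfies `𝓛_{2k}(-1/z) = z^{2k} 𝓛_{2k}(z)`. -/
theorem lucas_eisenstein_inversion (L : ℤ → ℤ) (h0 : L 0 = 2) (h1 : L 1 = 1)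
    (hrec : ∀ n : ℤ, L n = L (n - 1) + L (n - 2))
    (k : ℕ) (hk : 1 ≤ k) (z : ℂ) (hz0 : z ≠ 0)
    (hpole : ∀ n : ℤ, z ≠ (L n : ℂ) / (L (n - 1) : ℂ))
    (hphi : z ≠ (((1 + Real.sqrt 5) / 2 : ℝ) : ℂ))
    (hphi' : z ≠ -1 / (((1 + Real.sqrt 5) / 2 : ℝ) : ℂ)) :
    ∑' j : ℤ, (((L j : ℂ) * (-1 / z) + (L (j - 1) : ℂ)) ^ (2 * k))⁻¹ =
      z ^ (2 * k) * ∑' j : ℤ, (((L j : ℂ) * z + (L (j - 1) : ℂ)) ^ (2 * k))⁻¹ := by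
  set s : ℤ → ℤ := fun n => if Even n then 1 else -1 with hs
  have hs_succ : ∀ n : ℤ, s (n + 1) = -s n := by
    intro n
    by_cases h : Even n
    · have h1' : ¬ Even (n + 1) := by simp [Int.even_add_one, h]
      simp [hs, h, h1']
    · have h1' : Even (n + 1) := by simpa [Int.even_add_one] using h
      simp [hs, h, h1']
  have key : ∀ n : ℤ, L (-n) = s n * L n ∧ L (-(n + 1)) = s (n + 1) * L (n + 1) := by
    intro n
    induction n using Int.induction_on with
    | zero =>
      have h := hrec 1
      norm_num at h
      have hm1 : L (-1) = -1 := by omega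
      have hs0 : s 0 = 1 := by simp [hs]
      have hs1 : s 1 = -1 := by simp [hs]
      constructor
      · simp [hs0]
      · norm_num [hs1, hm1, h1]
    | succ n ih =>
      obtain ⟨ih1, ih2⟩ := ih
      have hr := hrec (-(n : ℤ))
      have e1 : (-(n : ℤ) - 1) = -((n : ℤ) + 1) := by ring
      have e2 : (-(n : ℤ) - 2) = -((n : ℤ) + 1 + 1) := by ring
      rw [e1, e2] at hr
      have hr2 := hrec ((n : ℤ) + 1 + 1)
      have e3 : ((n : ℤ) + 1 + 1 - 1) = (n : ℤ) + 1 := by ring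
      have e4 : ((n : ℤ) + 1 + 1 - 2) = (n : ℤ) := by ring
      rw [e3, e4] at hr2
      have hsn1 := hs_succ (n : ℤ)
      have hsn2 := hs_succ ((n : ℤ) + 1)
      refine ⟨ih2, ?_⟩
      rw [hsn2, hsn1]
      linear_combination (-1 : ℤ) * hr + ih1 - ih2 - s ↑n * hr2 - L (↑n + 1) * hsn1
    | pred n ih =>
      obtain ⟨ih1, ih2⟩ := ih
      have e0 : (-(-(n : ℤ) - 1)) = (n : ℤ) + 1 := by ring
      have e0' : (-(-(n : ℤ) - 1 + 1)) = (n : ℤ) := by ring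
      have e0'' : (-(n : ℤ) - 1 + 1) = -(n : ℤ) := by ring
      have e1 : (-(-(n : ℤ))) = (n : ℤ) := by ring
      have e2 : (-(-(n : ℤ) + 1)) = (n : ℤ) - 1 := by ring
      rw [e1] at ih1
      rw [e2] at ih2
      have hr := hrec ((n : ℤ) + 1)
      have e3 : ((n : ℤ) + 1 - 1) = (n : ℤ) := by ring
      have e4 : ((n : ℤ) + 1 - 2) = (n : ℤ) - 1 := by ring
      rw [e3, e4] at hr
      have hr2 := hrec (-(n : ℤ) + 1)
      have e5 : (-(n : ℤ) + 1 - 1) = -(n : ℤ) := by ring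
      have e6 : (-(n : ℤ) + 1 - 2) = -(n : ℤ) - 1 := by ring
      rw [e5, e6] at hr2
      have hsa : s (-(n : ℤ)) = -s (-(n : ℤ) - 1) := by
        have := hs_succ (-(n : ℤ) - 1)
        rw [e0''] at this
        exact this
      have hsb : s (-(n : ℤ) + 1) = -s (-(n : ℤ)) := hs_succ (-(n : ℤ))
      rw [e0, e0', e0'']
      constructor
      · linear_combination hr + ih1 + ih2 + s (-↑n + 1) * hr2 + L (-↑n) * hsb +
          L (-↑n - 1) * hsb - L (-↑n - 1) * hsa
      · exact ih1
  -- the sign squared facts over ℂ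
  have hs_sq : ∀ n : ℤ, ((s n : ℂ)) ^ (2 * k) = 1 := by
    intro n
    by_cases h : Even n
    · simp [hs, h]
    · simp only [hs, h, if_false]
      push_cast
      exact Even.neg_one_pow (even_two_mul k)
  have term : ∀ j : ℤ,
      (((L j : ℂ) * (-1 / z) + (L (j - 1) : ℂ)) ^ (2 * k))⁻¹ =
        z ^ (2 * k) * (((L (1 - j) : ℂ) * z + (L ((1 - j) - 1) : ℂ)) ^ (2 * k))⁻¹ := by
    intro j
    have e1 : (1 - j : ℤ) - 1 = -j := by ring
    have k1 : L (1 - j) = s (j - 1) * L (j - 1) := by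
      have := (key (j - 1)).1
      have e : (-(j - 1) : ℤ) = 1 - j := by ring
      rwa [e] at this
    have k2 : L (-j) = s j * L j := (key j).1
    have hsj : s j = -s (j - 1) := by
      have := hs_succ (j - 1)
      have e : (j - 1 + 1 : ℤ) = j := by ring
      rwa [e] at this
    have num : ((L (1 - j) : ℂ) * z + (L ((1 - j) - 1) : ℂ)) =
        (s (j - 1) : ℂ) * ((L (j - 1) : ℂ) * z - (L j : ℂ)) := by
      rw [e1, k1, k2, hsj]
      push_cast
      ring
    have lhs_eq : ((L j : ℂ) * (-1 / z) + (L (j - 1) : ℂ)) =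
        ((L (j - 1) : ℂ) * z - (L j : ℂ)) / z := by
      field_simp
      ring
    rw [lhs_eq, num, mul_pow, hs_sq, one_mul, div_pow, inv_div, div_eq_mul_inv]
  calc ∑' j : ℤ, (((L j : ℂ) * (-1 / z) + (L (j - 1) : ℂ)) ^ (2 * k))⁻¹
      = ∑' j : ℤ, z ^ (2 * k) * (((L (1 - j) : ℂ) * z + (L ((1 - j) - 1) : ℂ)) ^ (2 * k))⁻¹ :=
        tsum_congr term
    _ = z ^ (2 * k) * ∑' j : ℤ, (((L (1 - j) : ℂ) * z + (L ((1 - j) - 1) : ℂ)) ^ (2 * k))⁻¹ :=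
        tsum_mul_left
    _ = z ^ (2 * k) * ∑' j : ℤ, (((L j : ℂ) * z + (L (j - 1) : ℂ)) ^ (2 * k))⁻¹ := by
        congr 1
        exact (Equiv.subLeft (1 : ℤ)).tsum_eq
          (fun j => (((L j : ℂ) * z + (L (j - 1) : ℂ)) ^ (2 * k))⁻¹)
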